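/- Let F be a field, G = GL(3, F), B the upper triangular Borel, N the unipotent upper triangular subgroup, P_0 the mirabolic subgroup (matrices in GL(3) with bottom row (0,0,1)), B_0 = B ∩ P_0 (upper triangular matrices with lower-right entry 1), and w_1, w_2 the simple reflections. Then the set 𝔊 := P_0(F) ∪ {p^{-1} b w_2 u p : p ∈ P_0(F), b ∈ B_0(F), u ∈ N_2(F)} decomposes as a disjoint union P_0(F) ⊔ (B_0 w_2 N_2)^{B_0\P_0}, and every element γ ∈ 𝔊 \ P_0(F) can be written uniquely as γ = p^{-1} b w_2 u p with p ∈ B_0(F)\P_0(F), b ∈ B_0(F), u ∈ N_2(F). -/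
import Mathlib


open Matrix

variable {F : Type*} [Field F]

/-- The permutation matrix of `σ` (column convention). -/
def permM {n : ℕ} (F : Type*) [Field F] (σ : Equiv.Perm (Fin n)) :
    Matrix (Fin n) (Fin n) F :=
  Matrix.of fun i j => if σ j = i then 1 else 0

/-- `g` lies in the Borel subgroup `B` of upper triangular matrices. -/
def inB {n : ℕ} (g : GL (Fin n) F) : Prop :=
  ∀ i j : Fin n, j < i → (g : Matrix (Fin n) (Fin n) F) i j = 0

/-- `g` lies in the mirabolic subgroup `P₀` of `GL(3)`: bottom row `(0,0,1)`. -/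
def inP0 (g : GL (Fin 3) F) : Prop :=
  (g : Matrix (Fin 3) (Fin 3) F) 2 0 = 0 ∧
  (g : Matrix (Fin 3) (Fin 3) F) 2 1 = 0 ∧
  (g : Matrix (Fin 3) (Fin 3) F) 2 2 = 1

/-- `g` lies in `B₀ = B ∩ P₀`: upper triangular with lower-right entry `1`. -/
def inB0 (g : GL (Fin 3) F) : Prop :=
  inB g ∧ (g : Matrix (Fin 3) (Fin 3) F) 2 2 = 1

/-- `g` lies in the one-parameter root subgroup `N₂` of `GL(3)` (for the second simple
root): identity except possibly at the `(2,3)` entry (0-based `(1,2)`). -/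
def inN2 (g : GL (Fin 3) F) : Prop :=
  ∀ i j : Fin 3, ¬(i = 1 ∧ j = 2) →
    (g : Matrix (Fin 3) (Fin 3) F) i j = if i = j then 1 else 0

/-- The set `(B₀ w₂ N₂)^{B₀\P₀} = {p⁻¹ b w₂ u p : p ∈ P₀, b ∈ B₀, u ∈ N₂}`. -/
def conjSet (w₂ : GL (Fin 3) F) : Set (GL (Fin 3) F) :=
  {γ | ∃ p b u : GL (Fin 3) F, inP0 p ∧ inB0 b ∧ inN2 u ∧ γ = p⁻¹ * (b * w₂ * u) * p}

-- row-2 lemma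
lemma aux_row2 (A C : Matrix (Fin 3) (Fin 3) F) (h0 : A 2 0 = 0) (h1 : A 2 1 = 0)
    (h2 : A 2 2 = 1) (j : Fin 3) : (A * C) 2 j = C 2 j := by
  simp [Matrix.mul_apply, Fin.sum_univ_three, h0, h1, h2]

lemma aux_inv_row (p : GL (Fin 3) F) (hp : inP0 p) (j : Fin 3) :
    ((p⁻¹ : GL (Fin 3) F) : Matrix (Fin 3) (Fin 3) F) 2 j
      = (1 : Matrix (Fin 3) (Fin 3) F) 2 j := by
  have h : ((p : Matrix (Fin 3) (Fin 3) F) *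
      ((p⁻¹ : GL (Fin 3) F) : Matrix (Fin 3) (Fin 3) F)) = 1 := by
    rw [← Units.val_mul, mul_inv_cancel, Units.val_one]
  rw [← h, aux_row2 _ _ hp.1 hp.2.1 hp.2.2]

-- row-2 of b * w₂ * u
lemma aux_M_row (b w₂ u : GL (Fin 3) F)
    (hw₂ : (w₂ : Matrix (Fin 3) (Fin 3) F) = permM F (Equiv.swap 1 2))
    (hb : inB0 b) (hu : inN2 u) (j : Fin 3) :
    ((b : Matrix (Fin 3) (Fin 3) F) * (w₂ : Matrix (Fin 3) (Fin 3) F) *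
      (u : Matrix (Fin 3) (Fin 3) F)) 2 j
    = (u : Matrix (Fin 3) (Fin 3) F) 1 j := by
  have hb0 : (b : Matrix (Fin 3) (Fin 3) F) 2 0 = 0 := hb.1 2 0 (by decide)
  have hb1 : (b : Matrix (Fin 3) (Fin 3) F) 2 1 = 0 := hb.1 2 1 (by decide)
  have hw0 : (w₂ : Matrix (Fin 3) (Fin 3) F) 2 0 = 0 := by
    rw [hw₂]; simp [permM, Equiv.swap_apply_def]
  have hw1 : (w₂ : Matrix (Fin 3) (Fin 3) F) 2 1 = 1 := by
    rw [hw₂]; simp [permM, Equiv.swap_apply_def]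
  have hw2 : (w₂ : Matrix (Fin 3) (Fin 3) F) 2 2 = 0 := by
    rw [hw₂]; simp [permM, Equiv.swap_apply_def]
  have h1 : ∀ k, ((b : Matrix (Fin 3) (Fin 3) F) * (w₂ : Matrix (Fin 3) (Fin 3) F)) 2 k
      = (w₂ : Matrix (Fin 3) (Fin 3) F) 2 k :=
    aux_row2 _ _ hb0 hb1 hb.2
  have hu0 : (u : Matrix (Fin 3) (Fin 3) F) 0 j = if (0 : Fin 3) = j then 1 else 0 :=
    hu 0 j (by simp)
  have hu2 : (u : Matrix (Fin 3) (Fin 3) F) 2 j = if (2 : Fin 3) = j then 1 else 0 :=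
    hu 2 j (by simp)
  simp [Matrix.mul_apply, Fin.sum_univ_three, h1, hw0, hw1, hw2]

-- row 2 of p⁻¹ * (b*w₂*u) * p
lemma aux_conj_row (p b w₂ u : GL (Fin 3) F)
    (hw₂ : (w₂ : Matrix (Fin 3) (Fin 3) F) = permM F (Equiv.swap 1 2))
    (hp : inP0 p) (hb : inB0 b) (hu : inN2 u) (j : Fin 3) :
    ((p⁻¹ * (b * w₂ * u) * p : GL (Fin 3) F) : Matrix (Fin 3) (Fin 3) F) 2 j
    = (p : Matrix (Fin 3) (Fin 3) F) 1 j
      + (u : Matrix (Fin 3) (Fin 3) F) 1 2 * (p : Matrix (Fin 3) (Fin 3) F) 2 j := by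
  have hu10 : (u : Matrix (Fin 3) (Fin 3) F) 1 0 = 0 := by simpa using hu 1 0 (by simp)
  have hu11 : (u : Matrix (Fin 3) (Fin 3) F) 1 1 = 1 := by simpa using hu 1 1 (by simp)
  have hPi0 := aux_inv_row p hp 0
  have hPi1 := aux_inv_row p hp 1
  have hPi2 := aux_inv_row p hp 2
  rw [Matrix.one_apply] at hPi0 hPi1 hPi2
  simp only [Units.val_mul]
  rw [Matrix.mul_assoc, aux_row2 _ _ (by simpa using hPi0) (by simpa using hPi1)
    (by simpa using hPi2)]
  rw [Matrix.mul_apply, Fin.sum_univ_three, aux_M_row b w₂ u hw₂ hb hu,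
    aux_M_row b w₂ u hw₂ hb hu, aux_M_row b w₂ u hw₂ hb hu, hu10, hu11]
  ring

-- Part 1 core: γ in conj class is not in P₀
lemma aux_not_inP0 (p b w₂ u : GL (Fin 3) F)
    (hw₂ : (w₂ : Matrix (Fin 3) (Fin 3) F) = permM F (Equiv.swap 1 2))
    (hp : inP0 p) (hb : inB0 b) (hu : inN2 u) :
    ¬ inP0 (p⁻¹ * (b * w₂ * u) * p) := by
  intro hγ
  have h0 := aux_conj_row p b w₂ u hw₂ hp hb hu 0
  have h1 := aux_conj_row p b w₂ u hw₂ hp hb hu 1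
  rw [hγ.1, hp.1] at h0
  rw [hγ.2.1, hp.2.1] at h1
  have hp10 : (p : Matrix (Fin 3) (Fin 3) F) 1 0 = 0 := by
    rw [mul_zero, add_zero] at h0; exact h0.symm
  have hp11 : (p : Matrix (Fin 3) (Fin 3) F) 1 1 = 0 := by
    rw [mul_zero, add_zero] at h1; exact h1.symm
  have hdet : IsUnit (p : Matrix (Fin 3) (Fin 3) F).det :=
    (Matrix.isUnit_iff_isUnit_det _).mp p.isUnit
  rw [Matrix.det_fin_three, hp10, hp11, hp.1, hp.2.1] at hdet
  simp at hdet

/-- In `GL(3, F)`, the set `𝔊 = P₀ ∪ (B₀w₂N₂)^{B₀\P₀}` is a *disjoint*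
union, and every `γ ∈ 𝔊 ∖ P₀` can be written *uniquely* as `γ = p⁻¹ b w₂ u p` with
`p ∈ B₀\P₀`, `b ∈ B₀`, `u ∈ N₂`: the coset `B₀p` is unique, and for a fixed
representative `p` the elements `b` and `u` are unique. -/
theorem mirabolic_singular_decomposition_GL3 (w₂ : GL (Fin 3) F)
    (hw₂ : (w₂ : Matrix (Fin 3) (Fin 3) F) = permM F (Equiv.swap 1 2)) :
    (∀ γ : GL (Fin 3) F, γ ∈ conjSet w₂ → ¬ inP0 γ) ∧
    (∀ p p' b b' u u' : GL (Fin 3) F,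
      inP0 p → inP0 p' → inB0 b → inB0 b' → inN2 u → inN2 u' →
      p⁻¹ * (b * w₂ * u) * p = p'⁻¹ * (b' * w₂ * u') * p' →
      (∃ c : GL (Fin 3) F, inB0 c ∧ p' = c * p) ∧
      (p = p' → b = b' ∧ u = u')) := by
  constructor
  · rintro γ ⟨p, b, u, hp, hb, hu, rfl⟩
    exact aux_not_inP0 p b w₂ u hw₂ hp hb hu
  · intro p p' b b' u u' hp hp' hb hb' hu hu' h
    set q : GL (Fin 3) F := p' * p⁻¹ with hqdef
    have hq : q * (b * w₂ * u) = (b' * w₂ * u') * q := by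
      have h2 := congrArg (fun z => p' * z * p⁻¹) h
      simpa [hqdef, mul_assoc] using h2
    -- row 2 of ↑q
    have hQrow : ∀ j, (q : Matrix (Fin 3) (Fin 3) F) 2 j
        = (1 : Matrix (Fin 3) (Fin 3) F) 2 j := by
      intro j
      have : (q : Matrix (Fin 3) (Fin 3) F)
          = (p' : Matrix (Fin 3) (Fin 3) F) * ((p⁻¹ : GL (Fin 3) F) : Matrix (Fin 3) (Fin 3) F) := by
        rw [hqdef, Units.val_mul]
      rw [this, aux_row2 _ _ hp'.1 hp'.2.1 hp'.2.2, aux_inv_row p hp]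
    have hQ20 : (q : Matrix (Fin 3) (Fin 3) F) 2 0 = 0 := by
      rw [hQrow 0, Matrix.one_apply]; simp
    have hQ21 : (q : Matrix (Fin 3) (Fin 3) F) 2 1 = 0 := by
      rw [hQrow 1, Matrix.one_apply]; simp
    have hQ22 : (q : Matrix (Fin 3) (Fin 3) F) 2 2 = 1 := by
      rw [hQrow 2, Matrix.one_apply]; simp
    -- matrix form of hq
    have hqm : (q : Matrix (Fin 3) (Fin 3) F) *
        ((b : Matrix (Fin 3) (Fin 3) F) * (w₂ : Matrix (Fin 3) (Fin 3) F) * (u : Matrix (Fin 3) (Fin 3) F))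
        = ((b' : Matrix (Fin 3) (Fin 3) F) * (w₂ : Matrix (Fin 3) (Fin 3) F) * (u' : Matrix (Fin 3) (Fin 3) F))
          * (q : Matrix (Fin 3) (Fin 3) F) := by
      have := congrArg Units.val hq
      simpa only [Units.val_mul] using this
    have hrow : ∀ j : Fin 3, (u : Matrix (Fin 3) (Fin 3) F) 1 j
        = (q : Matrix (Fin 3) (Fin 3) F) 1 j
          + (u' : Matrix (Fin 3) (Fin 3) F) 1 2 * (q : Matrix (Fin 3) (Fin 3) F) 2 j := by
      intro j
      have hL : ((q : Matrix (Fin 3) (Fin 3) F) *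
          ((b : Matrix (Fin 3) (Fin 3) F) * (w₂ : Matrix (Fin 3) (Fin 3) F) * (u : Matrix (Fin 3) (Fin 3) F))) 2 j
          = (u : Matrix (Fin 3) (Fin 3) F) 1 j := by
        rw [aux_row2 _ _ hQ20 hQ21 hQ22, aux_M_row b w₂ u hw₂ hb hu]
      have hu'10 : (u' : Matrix (Fin 3) (Fin 3) F) 1 0 = 0 := by simpa using hu' 1 0 (by simp)
      have hu'11 : (u' : Matrix (Fin 3) (Fin 3) F) 1 1 = 1 := by simpa using hu' 1 1 (by simp)
      have hR : (((b' : Matrix (Fin 3) (Fin 3) F) * (w₂ : Matrix (Fin 3) (Fin 3) F) * (u' : Matrix (Fin 3) (Fin 3) F))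
          * (q : Matrix (Fin 3) (Fin 3) F)) 2 j
          = (q : Matrix (Fin 3) (Fin 3) F) 1 j
            + (u' : Matrix (Fin 3) (Fin 3) F) 1 2 * (q : Matrix (Fin 3) (Fin 3) F) 2 j := by
        rw [Matrix.mul_apply, Fin.sum_univ_three, aux_M_row b' w₂ u' hw₂ hb' hu',
          aux_M_row b' w₂ u' hw₂ hb' hu', aux_M_row b' w₂ u' hw₂ hb' hu', hu'10, hu'11]
        ring
      rw [← hL, hqm, hR]
    have hu10 : (u : Matrix (Fin 3) (Fin 3) F) 1 0 = 0 := by simpa using hu 1 0 (by simp)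
    have hu11 : (u : Matrix (Fin 3) (Fin 3) F) 1 1 = 1 := by simpa using hu 1 1 (by simp)
    have hQ10 : (q : Matrix (Fin 3) (Fin 3) F) 1 0 = 0 := by
      have := hrow 0; rw [hu10, hQ20, mul_zero, add_zero] at this; exact this.symm
    have hQ11 : (q : Matrix (Fin 3) (Fin 3) F) 1 1 = 1 := by
      have := hrow 1; rw [hu11, hQ21, mul_zero, add_zero] at this; exact this.symm
    constructor
    · refine ⟨q, ⟨?_, hQ22⟩, ?_⟩
      · intro i j hij
        fin_cases i <;> fin_cases j <;>
          first
          | exact absurd hij (by decide)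
          | exact hQ10
          | exact hQ20
          | exact hQ21
      · rw [hqdef, inv_mul_cancel_right]
    · rintro rfl
      have hq1 : q = 1 := by rw [hqdef, mul_inv_cancel]
      have hXY : b * w₂ * u = b' * w₂ * u' := by
        have := hq; rw [hq1, one_mul, mul_one] at this; exact this
      have hx : (u : Matrix (Fin 3) (Fin 3) F) 1 2 = (u' : Matrix (Fin 3) (Fin 3) F) 1 2 := by
        have h22 := congrArg (fun M : Matrix (Fin 3) (Fin 3) F => M 2 2)
          (congrArg Units.val hXY)
        simp only [Units.val_mul] at h22
        rwa [aux_M_row b w₂ u hw₂ hb hu, aux_M_row b' w₂ u' hw₂ hb' hu'] at h22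
      have huu : u = u' := by
        apply Units.ext
        ext i j
        by_cases hij : i = 1 ∧ j = 2
        · obtain ⟨rfl, rfl⟩ := hij; exact hx
        · rw [hu i j hij, hu' i j hij]
      refine ⟨?_, huu⟩
      rw [huu] at hXY
      exact mul_right_cancel (mul_right_cancel hXY)
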